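/- Let q be a unit biquaternion (q q* = 1) and let v = (t, ix, iy, iz) be a minquat with t, x, y, z ∈ ℝ. Then w = q v (q*)‾, where (q*)‾ denotes componentwise complex conjugation of the quaternion conjugate q*, is again a minquat, and it has the same biquaternion norm: w w* = v v*. In particular, the map v ↦ q v (q*)‾ preserves the Minkowski quadratic form t² − x² − y² − z². -/

import Mathlib

open Quaternion

/-- The minquat `(t, ix, iy, iz)` encoding the 4-vector `(t, x, y, z)`. -/
def minquat (t x y z : ℝ) : ℍ[ℂ] :=
  ⟨(t : ℂ), Complex.I * (x : ℂ), Complex.I * (y : ℂ), Complex.I * (z : ℂ)⟩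

/-- Componentwise complex conjugation of a biquaternion. -/
def biquatBar (q : ℍ[ℂ]) : ℍ[ℂ] :=
  ⟨(starRingEnd ℂ) q.re, (starRingEnd ℂ) q.imI, (starRingEnd ℂ) q.imJ, (starRingEnd ℂ) q.imK⟩

lemma bar_mul (a b : ℍ[ℂ]) : biquatBar (a * b) = biquatBar a * biquatBar b := by
  ext <;> simp only [Quaternion.re_mul, Quaternion.imI_mul,
    Quaternion.imJ_mul, Quaternion.imK_mul] <;> simp [biquatBar, Quaternion.re_mul, Quaternion.imI_mul,
    Quaternion.imJ_mul, Quaternion.imK_mul, map_mul]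

lemma bar_star (a : ℍ[ℂ]) : biquatBar (star a) = star (biquatBar a) := by
  ext <;> simp only [Quaternion.re_star, Quaternion.imI_star, Quaternion.imJ_star, Quaternion.imK_star] <;> simp [biquatBar]

lemma bar_bar (a : ℍ[ℂ]) : biquatBar (biquatBar a) = a := by
  ext <;> simp [biquatBar]

lemma bar_one : biquatBar 1 = 1 := by
  ext <;> simp [biquatBar]

lemma bar_minquat (t x y z : ℝ) : biquatBar (minquat t x y z) = star (minquat t x y z) := by
  ext <;> simp only [Quaternion.re_star, Quaternion.imI_star, Quaternion.imJ_star, Quaternion.imK_star] <;> simp [biquatBar, minquat, Complex.ext_iff]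

/-- If `q` is a unit biquaternion and `v = (t, ix, iy, iz)` is a minquat, then
`w = q v (q*)‾` is again a minquat with the same biquaternion norm; in particular the map
`v ↦ q v (q*)‾` preserves the Minkowski quadratic form `t² − x² − y² − z²`. -/
theorem unit_biquaternion_action_on_minquats (q : ℍ[ℂ]) (hq : q * star q = 1)
    (t x y z : ℝ) :
    (∃ t' x' y' z' : ℝ, q * minquat t x y z * biquatBar (star q) = minquat t' x' y' z') ∧
    (q * minquat t x y z * biquatBar (star q)) *
        star (q * minquat t x y z * biquatBar (star q))
      = minquat t x y z * star (minquat t x y z) := by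
  set v := minquat t x y z with hv
  set w := q * v * biquatBar (star q) with hw
  have hq' : star q * q = 1 := by rw [star_comm_self']; exact hq
  have hsw : star w = biquatBar q * (star v * star q) := by
    rw [hw, star_mul, star_mul, ← bar_star, star_star]
  have hbar : biquatBar w = star w := by
    rw [hw, bar_mul, bar_mul, bar_bar, bar_minquat, hsw, mul_assoc]
  constructor
  · refine ⟨w.re.re, w.imI.im, w.imJ.im, w.imK.im, ?_⟩
    have h1 := congrArg QuaternionAlgebra.re hbar
    have h2 := congrArg QuaternionAlgebra.imI hbar
    have h3 := congrArg QuaternionAlgebra.imJ hbar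
    have h4 := congrArg QuaternionAlgebra.imK hbar
    simp [biquatBar, Complex.ext_iff] at h1 h2 h3 h4
    ext <;> simp [minquat, Complex.ext_iff] <;> linarith
  · have hmid : biquatBar (star q) * (biquatBar q * (star v * star q))
        = star v * star q := by
      rw [← mul_assoc, ← bar_mul, hq', bar_one, one_mul]
    calc w * star w = q * v * (biquatBar (star q) * (biquatBar q * (star v * star q))) := by
          rw [hsw, hw, mul_assoc]
      _ = q * (v * star v) * star q := by rw [hmid]; noncomm_ring
      _ = v * star v := by
          rw [Quaternion.mul_star_eq_coe v, ← Quaternion.coe_commutes, mul_assoc, hq, mul_one]
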